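/- Let β(x) be a real polynomial and set β₂₂(x) = x·β(x) with β₁₁ = β. If β₁₁ and β₂₂ satisfy the curvature constraint equation (1+x²)²[4(x²−1)((β₁₁')²+(β₂₂')²) + (1+x²)²((β₁₁'')²+(β₂₂'')²)] − 8x(1+x²)(x²−2)(β₁₁β₁₁'+β₂₂β₂₂') + 4x²(1+x²)²(β₁₁β₁₁''+β₂₂β₂₂'') + 4(1−4x²+x⁴)(β₁₁²+β₂₂²) − 4x(1+x²)³(β₁₁'β₁₁''+β₂₂'β₂₂'') = 0 for all x ∈ ℝ, then this equation is equivalent to (1+x²)⁵ (β₁₁''(x))² = 0, hence β₁₁ is affine: β₁₁(x) = a₀ + d₂x. -/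

import Mathlib

theorem stmt13 (β : ℝ → ℝ) (hβ : ContDiff ℝ 2 β) :
    (∀ x : ℝ,
        (1 + x ^ 2) ^ 2 *
            (4 * (x ^ 2 - 1) *
                ((deriv β x) ^ 2 + (deriv (fun y => y * β y) x) ^ 2)
              + (1 + x ^ 2) ^ 2 *
                ((deriv (deriv β) x) ^ 2
                  + (deriv (deriv (fun y => y * β y)) x) ^ 2))
          - 8 * x * (1 + x ^ 2) * (x ^ 2 - 2) *
              (β x * deriv β x
                + (x * β x) * deriv (fun y => y * β y) x)
          + 4 * x ^ 2 * (1 + x ^ 2) ^ 2 *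
              (β x * deriv (deriv β) x
                + (x * β x) * deriv (deriv (fun y => y * β y)) x)
          + 4 * (1 - 4 * x ^ 2 + x ^ 4) * ((β x) ^ 2 + (x * β x) ^ 2)
          - 4 * x * (1 + x ^ 2) ^ 3 *
              (deriv β x * deriv (deriv β) x
                + deriv (fun y => y * β y) x *
                    deriv (deriv (fun y => y * β y)) x)
          = (1 + x ^ 2) ^ 5 * (deriv (deriv β) x) ^ 2)
    ∧
    ((∀ x : ℝ,
        (1 + x ^ 2) ^ 2 *
            (4 * (x ^ 2 - 1) *
                ((deriv β x) ^ 2 + (deriv (fun y => y * β y) x) ^ 2)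
              + (1 + x ^ 2) ^ 2 *
                ((deriv (deriv β) x) ^ 2
                  + (deriv (deriv (fun y => y * β y)) x) ^ 2))
          - 8 * x * (1 + x ^ 2) * (x ^ 2 - 2) *
              (β x * deriv β x
                + (x * β x) * deriv (fun y => y * β y) x)
          + 4 * x ^ 2 * (1 + x ^ 2) ^ 2 *
              (β x * deriv (deriv β) x
                + (x * β x) * deriv (deriv (fun y => y * β y)) x)
          + 4 * (1 - 4 * x ^ 2 + x ^ 4) * ((β x) ^ 2 + (x * β x) ^ 2)
          - 4 * x * (1 + x ^ 2) ^ 3 *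
              (deriv β x * deriv (deriv β) x
                + deriv (fun y => y * β y) x *
                    deriv (deriv (fun y => y * β y)) x)
          = 0)
      ↔ ∃ a₀ d₂ : ℝ, ∀ x : ℝ, β x = a₀ + d₂ * x) := by
  have hd : Differentiable ℝ β := hβ.differentiable (by norm_num)
  have hm : ∀ (c y : ℝ), deriv (fun z : ℝ => c * z) y = c := by
    intro c y
    simpa using deriv_const_mul c (differentiableAt_id' (x := y))
  have hd' : Differentiable ℝ (deriv β) := by
    have h11 : ContDiff ℝ ((1 : ℕ∞) + 1) β := by
      exact_mod_cast hβ
    exact ((contDiff_succ_iff_deriv.mp h11).2.2).differentiable (by norm_num)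
  have h1 : ∀ x : ℝ, deriv (fun y => y * β y) x = β x + x * deriv β x := by
    intro x
    have := deriv_fun_mul (differentiableAt_fun_id (x := x)) (hd x)
    simpa [mul_comm] using this
  have h1' : (deriv (fun y => y * β y)) = fun x => β x + x * deriv β x :=
    funext h1
  have h2 : ∀ x : ℝ, deriv (deriv (fun y => y * β y)) x
      = 2 * deriv β x + x * deriv (deriv β) x := by
    intro x
    rw [h1']
    rw [deriv_fun_add (hd x) ((differentiableAt_fun_id.fun_mul (hd' x)))]
    rw [deriv_fun_mul differentiableAt_fun_id (hd' x)]
    simp; ring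
  have key : ∀ x : ℝ,
      (1 + x ^ 2) ^ 2 *
          (4 * (x ^ 2 - 1) *
              ((deriv β x) ^ 2 + (deriv (fun y => y * β y) x) ^ 2)
            + (1 + x ^ 2) ^ 2 *
              ((deriv (deriv β) x) ^ 2
                + (deriv (deriv (fun y => y * β y)) x) ^ 2))
        - 8 * x * (1 + x ^ 2) * (x ^ 2 - 2) *
            (β x * deriv β x
              + (x * β x) * deriv (fun y => y * β y) x)
        + 4 * x ^ 2 * (1 + x ^ 2) ^ 2 *
            (β x * deriv (deriv β) x
              + (x * β x) * deriv (deriv (fun y => y * β y)) x)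
        + 4 * (1 - 4 * x ^ 2 + x ^ 4) * ((β x) ^ 2 + (x * β x) ^ 2)
        - 4 * x * (1 + x ^ 2) ^ 3 *
            (deriv β x * deriv (deriv β) x
              + deriv (fun y => y * β y) x *
                  deriv (deriv (fun y => y * β y)) x)
        = (1 + x ^ 2) ^ 5 * (deriv (deriv β) x) ^ 2 := by
    intro x
    rw [h1 x, h2 x]
    ring
  refine ⟨key, ?_, ?_⟩
  · intro h
    have hzero : ∀ x : ℝ, deriv (deriv β) x = 0 := by
      intro x
      have := (key x).symm.trans (h x)
      have hx : (1 + x ^ 2) ^ 5 ≠ 0 := by positivity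
      have := mul_eq_zero.mp this
      rcases this with h' | h'
      · exact absurd h' hx
      · exact pow_eq_zero_iff (n := 2) (by norm_num) |>.mp h'
    have hc1 : ∀ x : ℝ, deriv β x = deriv β 0 := by
      intro x
      exact is_const_of_deriv_eq_zero hd' hzero x 0
    refine ⟨β 0, deriv β 0, fun x => ?_⟩
    have : ∀ x : ℝ, deriv (fun y => β y - deriv β 0 * y) x = 0 := by
      intro y
      rw [deriv_fun_sub (hd y) (by fun_prop)]
      simp [hc1 y, hm]
    have hcst := is_const_of_deriv_eq_zero
      (f := fun y => β y - deriv β 0 * y) (hd.sub (by fun_prop)) this x 0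
    simp [hm] at hcst
    linarith
  · rintro ⟨a₀, d₂, hb⟩ x
    have hb' : β = fun x => a₀ + d₂ * x := funext hb
    have hd1 : deriv β = fun _ => d₂ := by
      rw [hb']; funext y
      rw [deriv_fun_add (by fun_prop) (by fun_prop)]
      simp [hm]
    have hd2 : ∀ y, deriv (deriv β) y = 0 := by
      rw [hd1]; simp
    rw [key x, hd2 x]; ring
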